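/- Let p ≥ 2 be an integer and let d : ℕ → ℝ be any function such that for every i ≥ p, writing e = ⌊log_p i⌋ (so p^e ≤ i < p^{e+1} and e ≥ 1), one has d(i) = 2i + p^{e+1} − p^e + 2 if p^{e+1} − p^e + p^{e−1} ≤ i, and d(i) = 3i − p^{e−1} + 3 if i < p^{e+1} − p^e + p^{e−1}. Then the limit of d(i)/i as i → ∞ does not exist; that is, there is no real number L such that the sequence i ↦ d(i)/i tends to L. -/

import Mathlib

open Filter

/-- Conclusion of Theorem 4.2 of the paper: if `d : ℕ → ℝ` satisfies, for every `i ≥ p`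
(writing `e = ⌊log_p i⌋`, so `p^e ≤ i < p^{e+1}` and `e ≥ 1`),
`d(i) = 2i + p^{e+1} − p^e + 2` when `p^{e+1} − p^e + p^{e−1} ≤ i` and
`d(i) = 3i − p^{e−1} + 3` when `i < p^{e+1} − p^e + p^{e−1}`, then the limit of
`d(i)/i` as `i → ∞` does not exist. -/
theorem limit_does_not_exist (p : ℕ) (hp : 2 ≤ p) (d : ℕ → ℝ)
    (hd : ∀ i : ℕ, p ≤ i →
      (p ^ (Nat.log p i + 1) - p ^ (Nat.log p i) + p ^ (Nat.log p i - 1) ≤ i →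
        d i = 2 * i + (p : ℝ) ^ (Nat.log p i + 1) - (p : ℝ) ^ (Nat.log p i) + 2) ∧
      (i < p ^ (Nat.log p i + 1) - p ^ (Nat.log p i) + p ^ (Nat.log p i - 1) →
        d i = 3 * i - (p : ℝ) ^ (Nat.log p i - 1) + 3)) :
    ¬ ∃ L : ℝ, Filter.Tendsto (fun i : ℕ => d i / i) Filter.atTop (nhds L) := by
  rintro ⟨L, hL⟩
  have hp1 : 1 < p := by omega
  have hq1 : (1 : ℝ) < (p : ℝ) := by exact_mod_cast hp1
  have hq0 : (0 : ℝ) < (p : ℝ) := by linarith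
  set q : ℝ := (p : ℝ) with hq
  -- basic nat inequalities
  have key : ∀ e : ℕ, 1 ≤ e → p ^ e < p ^ (e+1) - p ^ e + p ^ (e-1) ∧
      p ^ (e+1) - p ^ e + p ^ (e-1) < p ^ (e+1) ∧ p ^ e ≤ p ^ (e+1) := by
    intro e he
    have h1 : p ^ e = p * p ^ (e-1) := by
      conv_lhs => rw [show e = (e-1) + 1 by omega]
      rw [pow_succ]; ring
    have h2 : p ^ (e+1) = p * p ^ e := by rw [pow_succ]; ring
    have hA : 1 ≤ p ^ (e-1) := Nat.one_le_pow _ _ (by omega)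
    have h3 : 2 * p ^ (e-1) ≤ p ^ e := by rw [h1]; exact Nat.mul_le_mul_right _ hp
    have h4 : 2 * p ^ e ≤ p ^ (e+1) := by rw [h2]; exact Nat.mul_le_mul_right _ hp
    omega
  -- ## Subsequence 1 : i = p^e
  have hpowN : Tendsto (fun e : ℕ => p ^ e) atTop atTop :=
    tendsto_pow_atTop_atTop_of_one_lt hp1
  have hcomp1 : Tendsto (fun e : ℕ => d (p ^ e) / ((p ^ e : ℕ) : ℝ)) atTop (nhds L) :=
    hL.comp hpowN
  have hqpow : Tendsto (fun e : ℕ => q ^ e) atTop atTop :=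
    tendsto_pow_atTop_atTop_of_one_lt hq1
  have h30 : Tendsto (fun e : ℕ => 3 / q ^ e) atTop (nhds 0) :=
    Tendsto.div_atTop tendsto_const_nhds hqpow
  have hg1 : Tendsto (fun e : ℕ => 3 - 1/q + 3 / q ^ e) atTop (nhds (3 - 1/q)) := by
    have := (tendsto_const_nhds (x := (3 - 1/q : ℝ)) (f := atTop (α := ℕ))).add h30
    simpa using this
  have heq1 : (fun e : ℕ => 3 - 1/q + 3 / q ^ e) =ᶠ[atTop]
      (fun e : ℕ => d (p ^ e) / ((p ^ e : ℕ) : ℝ)) := by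
    filter_upwards [eventually_ge_atTop 1] with e he
    have hkey := key e he
    have hpi : p ≤ p ^ e := by
      calc p = p ^ 1 := (pow_one p).symm
      _ ≤ p ^ e := Nat.pow_le_pow_right (by omega) he
    have hlog : Nat.log p (p ^ e) = e := Nat.log_pow hp1 e
    have hdval := (hd (p ^ e) hpi).2
    rw [hlog] at hdval
    have hdv := hdval hkey.1
    rw [hdv]
    have hA : q ^ e = q ^ (e-1) * q := by
      rw [← pow_succ]; congr 1; omega
    have hA0 : q ^ (e-1) ≠ 0 := by positivity
    push_cast
    rw [hA]
    field_simp
  have hL1 : L = 3 - 1/q := tendsto_nhds_unique hcomp1 (hg1.congr' heq1)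
  -- ## Subsequence 2 : i = p^(e+1) - p^e + p^(e-1)
  set b : ℕ → ℕ := fun e => p ^ (e+1) - p ^ e + p ^ (e-1) with hb
  have hbtop : Tendsto b atTop atTop := by
    apply tendsto_atTop_mono' _ _ hpowN
    filter_upwards [eventually_ge_atTop 1] with e he
    exact le_of_lt (key e he).1
  have hcomp2 : Tendsto (fun e : ℕ => d (b e) / ((b e : ℕ) : ℝ)) atTop (nhds L) :=
    hL.comp hbtop
  -- limit of the second subsequence
  have hden0 : q^2 - q + 1 ≠ 0 := by nlinarith
  have hr : Tendsto (fun e : ℕ => 2 / q ^ (e-1)) atTop (nhds 0) := by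
    apply Tendsto.div_atTop tendsto_const_nhds
    exact hqpow.comp (tendsto_sub_atTop_nat 1)
  have hg2 : Tendsto (fun e : ℕ => (3*q^2 - 3*q + 2 + 2 / q ^ (e-1)) / (q^2 - q + 1))
      atTop (nhds ((3*q^2 - 3*q + 2) / (q^2 - q + 1))) := by
    have := ((tendsto_const_nhds (x := (3*q^2 - 3*q + 2 : ℝ)) (f := atTop (α := ℕ))).add
      hr).div_const (q^2 - q + 1)
    simpa using this
  have heq2 : (fun e : ℕ => (3*q^2 - 3*q + 2 + 2 / q ^ (e-1)) / (q^2 - q + 1)) =ᶠ[atTop]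
      (fun e : ℕ => d (b e) / ((b e : ℕ) : ℝ)) := by
    filter_upwards [eventually_ge_atTop 1] with e he
    obtain ⟨k1, k2, k3⟩ := key e he
    have hbe : b e = p ^ (e+1) - p ^ e + p ^ (e-1) := rfl
    have hpi : p ≤ b e := by
      have : p ≤ p ^ e := by
        calc p = p ^ 1 := (pow_one p).symm
        _ ≤ p ^ e := Nat.pow_le_pow_right (by omega) he
      omega
    have hlog : Nat.log p (b e) = e :=
      Nat.log_eq_of_pow_le_of_lt_pow (by omega) (by omega)
    have hdval := (hd (b e) hpi).1
    rw [hlog] at hdval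
    have hdv := hdval (by omega)
    have hbcast : ((b e : ℕ) : ℝ) = q ^ (e+1) - q ^ e + q ^ (e-1) := by
      simp only [hb]
      push_cast [Nat.cast_sub k3]
      ring
    rw [hdv, hbcast]
    have hA : q ^ e = q ^ (e-1) * q := by rw [← pow_succ]; congr 1; omega
    have hB : q ^ (e+1) = q ^ (e-1) * q * q := by
      rw [pow_succ, hA]
    have hA0 : q ^ (e-1) ≠ 0 := by positivity
    have hpos : q ^ (e+1) - q ^ e + q ^ (e-1) ≠ 0 := by
      rw [hA, hB]
      have h1 : (0:ℝ) < q ^ (e-1) := by positivity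
      have h2 : (0:ℝ) < q*q - q + 1 := by nlinarith
      nlinarith [mul_pos h1 h2]
    rw [hB, hA] at hpos ⊢
    field_simp
    ring
  have hL2 : L = (3*q^2 - 3*q + 2) / (q^2 - q + 1) :=
    tendsto_nhds_unique hcomp2 (hg2.congr' heq2)
  -- contradiction
  rw [hL1] at hL2
  have hq0' : q ≠ 0 := ne_of_gt hq0
  field_simp at hL2
  have hden1 : q * (q - 1) + 1 ≠ 0 := by nlinarith
  rw [eq_div_iff hden1] at hL2
  have hsq : 0 < (q - 1) * (q - 1) := mul_pos (sub_pos.2 hq1) (sub_pos.2 hq1)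
  nlinarith [sq_nonneg (q - 1)]
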